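/- Let N ≥ 1 and let u₀ ∈ L¹(ℝ^N) satisfy u₀ ≥ 0, M = ∫_{ℝ^N} u₀(x) dx > 0, and ∫_{ℝ^N} |y|² u₀(y) dy < ∞. Let x_c = (1/M) ∫_{ℝ^N} y u₀(y) dy be the center of mass and 𝒩₂* = ∫_{ℝ^N} |y − x_c|² u₀(y) dy the centered second moment, and let u(x,t) = ∫_{ℝ^N} G_t(x−y) u₀(y) dy. Then there is a constant C > 0 depending only on N such that for all t > 0: sup_{x∈ℝ^N} |u(x,t) − M·G_t(x − x_c)| ≤ C·𝒩₂*·t^{−(N+2)/2} and ∫_{ℝ^N} |u(x,t) − M·G_t(x − x_c)| dx ≤ C·𝒩₂*·t^{−1}. -/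

import Mathlib

open MeasureTheory Real Filter

/-- The Gaussian heat kernel on `ℝ^N`: `G_t(x) = (4πt)^{-N/2} exp(-|x|²/(4t))`. -/
noncomputable def heatKernel (N : ℕ) (t : ℝ) (x : EuclideanSpace ℝ (Fin N)) : ℝ :=
  (4 * π * t) ^ (-(N : ℝ) / 2) * exp (-‖x‖ ^ 2 / (4 * t))

/-- The solution of the heat equation with initial data `u₀`, given by convolution
with the heat kernel: `u(x,t) = ∫ G_t(x-y) u₀(y) dy`. -/
noncomputable def heatSol (N : ℕ) (u₀ : EuclideanSpace ℝ (Fin N) → ℝ)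
    (x : EuclideanSpace ℝ (Fin N)) (t : ℝ) : ℝ :=
  ∫ y, heatKernel N t (x - y) * u₀ y
open scoped RealInnerProductSpace

namespace HeatAux

variable {N : ℕ} {t : ℝ}

lemma c_pos (ht : 0 < t) : 0 < (4 * π * t) ^ (-(N : ℝ) / 2) :=
  rpow_pos_of_pos (by positivity) _

lemma hk_pos (ht : 0 < t) (x : EuclideanSpace ℝ (Fin N)) : 0 < heatKernel N t x := by
  unfold heatKernel; positivity

lemma norm_sub_smul_sq (a v : EuclideanSpace ℝ (Fin N)) (s : ℝ) :
    ‖a - s • v‖ ^ 2 = ‖a‖ ^ 2 - 2 * s * ⟪a, v⟫ + s ^ 2 * ‖v‖ ^ 2 := by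
  rw [norm_sub_sq_real, real_inner_smul_right, norm_smul]
  simp [mul_pow, sq_abs]; ring

lemma hk_eq (a v : EuclideanSpace ℝ (Fin N)) (s : ℝ) :
    heatKernel N t (a - s • v) =
      (4 * π * t) ^ (-(N : ℝ) / 2) *
        exp (-(‖a‖ ^ 2 - 2 * s * ⟪a, v⟫ + s ^ 2 * ‖v‖ ^ 2) / (4 * t)) := by
  rw [heatKernel, norm_sub_smul_sq]

/-- first derivative of `s ↦ G_t(a - s v)` -/
noncomputable def F1 (N : ℕ) (t : ℝ) (a v : EuclideanSpace ℝ (Fin N)) (s : ℝ) : ℝ :=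
  heatKernel N t (a - s • v) * ((2 * ⟪a, v⟫ - 2 * s * ‖v‖ ^ 2) / (4 * t))

/-- second derivative of `s ↦ G_t(a - s v)` -/
noncomputable def F2 (N : ℕ) (t : ℝ) (a v : EuclideanSpace ℝ (Fin N)) (s : ℝ) : ℝ :=
  heatKernel N t (a - s • v) *
    (((2 * ⟪a, v⟫ - 2 * s * ‖v‖ ^ 2) / (4 * t)) ^ 2 - 2 * ‖v‖ ^ 2 / (4 * t))

lemma hasDerivAt_q (a v : EuclideanSpace ℝ (Fin N)) (s : ℝ) :
    HasDerivAt (fun s : ℝ => -(‖a‖ ^ 2 - 2 * s * ⟪a, v⟫ + s ^ 2 * ‖v‖ ^ 2) / (4 * t))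
      ((2 * ⟪a, v⟫ - 2 * s * ‖v‖ ^ 2) / (4 * t)) s := by
  have h1 : HasDerivAt (fun s : ℝ => ‖a‖ ^ 2 - 2 * s * ⟪a, v⟫ + s ^ 2 * ‖v‖ ^ 2)
      (0 - 2 * 1 * ⟪a, v⟫ + (2 : ℕ) * s ^ (2 - 1) * ‖v‖ ^ 2) s :=
    (((hasDerivAt_const s (‖a‖^2)).sub
      (((hasDerivAt_id s).const_mul 2).mul_const ⟪a,v⟫)).add
      ((hasDerivAt_pow 2 s).mul_const (‖v‖^2)))
  have h2 := (h1.neg).div_const (4*t)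
  refine h2.congr_deriv ?_
  push_cast
  ring

lemma hasDerivAt_F (a v : EuclideanSpace ℝ (Fin N)) (s : ℝ) :
    HasDerivAt (fun s : ℝ => heatKernel N t (a - s • v)) (F1 N t a v s) s := by
  have h := ((hasDerivAt_q (t := t) a v s).exp).const_mul ((4 * π * t) ^ (-(N : ℝ) / 2))
  have he : (fun s : ℝ => heatKernel N t (a - s • v)) =
      fun s : ℝ => (4 * π * t) ^ (-(N : ℝ) / 2) *
        exp (-(‖a‖ ^ 2 - 2 * s * ⟪a, v⟫ + s ^ 2 * ‖v‖ ^ 2) / (4 * t)) := by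
    funext s; exact hk_eq a v s
  rw [he, F1, hk_eq]
  refine h.congr_deriv ?_
  ring

lemma hasDerivAt_F1 (a v : EuclideanSpace ℝ (Fin N)) (s : ℝ) :
    HasDerivAt (F1 N t a v) (F2 N t a v s) s := by
  have hL : HasDerivAt (fun s : ℝ => (2 * ⟪a, v⟫ - 2 * s * ‖v‖ ^ 2) / (4 * t))
      ((0 - 2 * 1 * ‖v‖ ^ 2) / (4 * t)) s := by
    exact (((hasDerivAt_const s (2*⟪a,v⟫)).sub
      (((hasDerivAt_id s).const_mul 2).mul_const (‖v‖^2))).div_const (4*t))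
  have h := (hasDerivAt_F (t := t) a v s).mul hL
  rw [F2]
  refine h.congr_deriv ?_
  rw [F1, hk_eq]
  ring


/-- dominating function for the second derivative: `H(w) = (c/t) e^{-|w|²/4t}(|w|²/4t + 1/2)`. -/
noncomputable def Hfun (N : ℕ) (t : ℝ) (w : EuclideanSpace ℝ (Fin N)) : ℝ :=
  ((4 * π * t) ^ (-(N : ℝ) / 2) / t) *
    (exp (-‖w‖ ^ 2 / (4 * t)) * (‖w‖ ^ 2 / (4 * t) + 1 / 2))

lemma Hfun_nonneg (ht : 0 < t) (w : EuclideanSpace ℝ (Fin N)) : 0 ≤ Hfun N t w := by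
  unfold Hfun
  have := c_pos (N := N) ht
  positivity

lemma Hfun_continuous (ht : 0 < t) : Continuous (Hfun N t) := by
  unfold Hfun
  fun_prop

lemma F2_abs_le (ht : 0 < t) (a v : EuclideanSpace ℝ (Fin N)) (s : ℝ) :
    |F2 N t a v s| ≤ ‖v‖ ^ 2 * Hfun N t (a - s • v) := by
  have hw : 2 * ⟪a, v⟫ - 2 * s * ‖v‖ ^ 2 = 2 * ⟪a - s • v, v⟫ := by
    rw [inner_sub_left, real_inner_smul_left, real_inner_self_eq_norm_sq]; ring
  set w := a - s • v with hwdef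
  have hCS : ⟪w, v⟫ ^ 2 ≤ ‖w‖ ^ 2 * ‖v‖ ^ 2 := by
    have h := abs_real_inner_le_norm w v
    have h2 : |⟪w, v⟫| ^ 2 ≤ (‖w‖ * ‖v‖) ^ 2 := by
      apply pow_le_pow_left₀ (abs_nonneg _) h
    rw [sq_abs] at h2
    calc ⟪w, v⟫ ^ 2 ≤ (‖w‖ * ‖v‖) ^ 2 := h2
    _ = ‖w‖ ^ 2 * ‖v‖ ^ 2 := by ring
  rw [F2, hw]
  rw [abs_mul, abs_of_pos (hk_pos ht w)]
  have hX : |(2 * ⟪w, v⟫ / (4 * t)) ^ 2 - 2 * ‖v‖ ^ 2 / (4 * t)| ≤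
      ‖v‖ ^ 2 * ((1 / t) * (‖w‖ ^ 2 / (4 * t) + 1 / 2)) := by
    have e1 : (2 * ⟪w, v⟫ / (4 * t)) ^ 2 = ⟪w, v⟫ ^ 2 * (1 / (4 * t ^ 2)) := by
      field_simp; ring
    have e2 : ‖v‖ ^ 2 * ((1 / t) * (‖w‖ ^ 2 / (4 * t) + 1 / 2)) =
        ‖w‖ ^ 2 * ‖v‖ ^ 2 * (1 / (4 * t ^ 2)) + ‖v‖ ^ 2 * (1 / (2 * t)) := by
      field_simp
    have e3 : 2 * ‖v‖ ^ 2 / (4 * t) = ‖v‖ ^ 2 * (1 / (2 * t)) := by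
      field_simp; ring
    have hk1 : (0:ℝ) < 1 / (4 * t ^ 2) := by positivity
    have hk2 : (0:ℝ) ≤ ‖v‖ ^ 2 * (1 / (2 * t)) := by positivity
    have key : ⟪w, v⟫ ^ 2 * (1 / (4 * t ^ 2)) ≤ ‖w‖ ^ 2 * ‖v‖ ^ 2 * (1 / (4 * t ^ 2)) :=
      mul_le_mul_of_nonneg_right hCS hk1.le
    have hsq : (0:ℝ) ≤ ⟪w, v⟫ ^ 2 * (1 / (4 * t ^ 2)) := by positivity
    rw [e1, e2, e3, abs_le]
    constructor <;> nlinarith [key, hsq, hk2]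
  calc heatKernel N t w * |(2 * ⟪w, v⟫ / (4 * t)) ^ 2 - 2 * ‖v‖ ^ 2 / (4 * t)|
      ≤ heatKernel N t w * (‖v‖ ^ 2 * ((1 / t) * (‖w‖ ^ 2 / (4 * t) + 1 / 2))) :=
        mul_le_mul_of_nonneg_left hX (hk_pos ht w).le
    _ = ‖v‖ ^ 2 * Hfun N t w := by
        unfold heatKernel Hfun; ring

lemma rho_exp_le (ρ : ℝ) (hρ : 0 ≤ ρ) : ρ * exp (-ρ) ≤ 1 := by
  have h1 := add_one_le_exp ρ
  have h2 := exp_pos ρ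
  rw [exp_neg]
  rw [mul_inv_le_iff₀ h2]
  nlinarith

lemma Hfun_le_sup (ht : 0 < t) (w : EuclideanSpace ℝ (Fin N)) :
    Hfun N t w ≤ (3 / 2) * (4 * π) ^ (-(N : ℝ) / 2) * t ^ (-((N : ℝ) + 2) / 2) := by
  set ρ := ‖w‖ ^ 2 / (4 * t) with hρdef
  have hρ : 0 ≤ ρ := by positivity
  have h1 : exp (-ρ) * (ρ + 1 / 2) ≤ 3 / 2 := by
    have := rho_exp_le ρ hρ
    have h2 : exp (-ρ) ≤ 1 := exp_le_one_iff.mpr (by linarith)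
    nlinarith [exp_pos (-ρ)]
  have hc : (4 * π * t) ^ (-(N : ℝ) / 2) / t =
      (4 * π) ^ (-(N : ℝ) / 2) * t ^ (-((N : ℝ) + 2) / 2) := by
    rw [Real.mul_rpow (by positivity) ht.le]
    rw [div_eq_mul_inv, mul_assoc, ← Real.rpow_neg_one t, ← Real.rpow_add ht]
    ring_nf
  have hHeq : Hfun N t w = ((4 * π * t) ^ (-(N : ℝ) / 2) / t) * (exp (-ρ) * (ρ + 1 / 2)) := by
    unfold Hfun
    rw [hρdef]
    ring_nf
  rw [hHeq, hc]
  have hcpos : (0:ℝ) ≤ (4 * π) ^ (-(N : ℝ) / 2) * t ^ (-((N : ℝ) + 2) / 2) := by positivity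
  calc (4 * π) ^ (-(N : ℝ) / 2) * t ^ (-((N : ℝ) + 2) / 2) * (exp (-ρ) * (ρ + 1 / 2))
      ≤ (4 * π) ^ (-(N : ℝ) / 2) * t ^ (-((N : ℝ) + 2) / 2) * (3 / 2) :=
        mul_le_mul_of_nonneg_left h1 hcpos
    _ = (3 / 2) * (4 * π) ^ (-(N : ℝ) / 2) * t ^ (-((N : ℝ) + 2) / 2) := by ring

lemma Hfun_le_hat (ht : 0 < t) (w : EuclideanSpace ℝ (Fin N)) :
    Hfun N t w ≤ ((5 / 2) * ((4 * π * t) ^ (-(N : ℝ) / 2) / t)) *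
      exp (-(1 / (8 * t)) * ‖w‖ ^ 2) := by
  have hsplit : exp (-‖w‖ ^ 2 / (4 * t)) =
      exp (-(1 / (8 * t)) * ‖w‖ ^ 2) * exp (-(1 / (8 * t)) * ‖w‖ ^ 2) := by
    rw [← Real.exp_add]
    congr 1
    field_simp
    ring
  have hρ' : (0:ℝ) ≤ (1 / (8 * t)) * ‖w‖ ^ 2 := by positivity
  have h2 : exp (-(1 / (8 * t)) * ‖w‖ ^ 2) * (‖w‖ ^ 2 / (4 * t) + 1 / 2) ≤ 5 / 2 := by
    have h3 : ((1 / (8 * t)) * ‖w‖ ^ 2) * exp (-((1 / (8 * t)) * ‖w‖ ^ 2)) ≤ 1 :=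
      rho_exp_le _ hρ'
    have h4 : exp (-(1 / (8 * t)) * ‖w‖ ^ 2) ≤ 1 := exp_le_one_iff.mpr (by linarith)
    have h5 : ‖w‖ ^ 2 / (4 * t) = 2 * ((1 / (8 * t)) * ‖w‖ ^ 2) := by field_simp; ring
    have hee : -(1 / (8 * t)) * ‖w‖ ^ 2 = -(1 / (8 * t) * ‖w‖ ^ 2) := by ring
    rw [h5, hee]
    rw [hee] at h4
    nlinarith [exp_pos (-(1 / (8 * t) * ‖w‖ ^ 2))]
  have hcpos : (0:ℝ) ≤ (4 * π * t) ^ (-(N : ℝ) / 2) / t := by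
    have := c_pos (N := N) ht; positivity
  have hepos : (0:ℝ) < exp (-(1 / (8 * t)) * ‖w‖ ^ 2) := exp_pos _
  unfold Hfun
  rw [hsplit]
  calc (4 * π * t) ^ (-(N : ℝ) / 2) / t *
        (exp (-(1 / (8 * t)) * ‖w‖ ^ 2) * exp (-(1 / (8 * t)) * ‖w‖ ^ 2) *
          (‖w‖ ^ 2 / (4 * t) + 1 / 2))
      = ((4 * π * t) ^ (-(N : ℝ) / 2) / t) *
          (exp (-(1 / (8 * t)) * ‖w‖ ^ 2) * (‖w‖ ^ 2 / (4 * t) + 1 / 2)) *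
          exp (-(1 / (8 * t)) * ‖w‖ ^ 2) := by ring
    _ ≤ ((4 * π * t) ^ (-(N : ℝ) / 2) / t) * (5 / 2) * exp (-(1 / (8 * t)) * ‖w‖ ^ 2) := by
        apply mul_le_mul_of_nonneg_right _ hepos.le
        exact mul_le_mul_of_nonneg_left h2 hcpos
    _ = ((5 / 2) * ((4 * π * t) ^ (-(N : ℝ) / 2) / t)) * exp (-(1 / (8 * t)) * ‖w‖ ^ 2) := by
        ring

lemma integrable_gauss (ht : 0 < t) :
    Integrable (fun w : EuclideanSpace ℝ (Fin N) => exp (-(1 / (8 * t)) * ‖w‖ ^ 2)) := by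
  have hb : (0:ℝ) < 1 / (8 * t) := by positivity
  have h := (GaussianFourier.integrable_cexp_neg_mul_sq_norm_add
    (V := EuclideanSpace ℝ (Fin N)) (b := ((1 / (8 * t) : ℝ) : ℂ)) (by simpa using hb)
    0 (0 : EuclideanSpace ℝ (Fin N))).norm
  have he : (fun a : EuclideanSpace ℝ (Fin N) =>
      ‖Complex.exp (-((1 / (8 * t) : ℝ) : ℂ) * (‖a‖ : ℂ) ^ 2 + 0 * ((inner ℝ (0 : EuclideanSpace ℝ (Fin N)) a : ℝ) : ℂ))‖) =
      (fun w : EuclideanSpace ℝ (Fin N) => exp (-(1 / (8 * t)) * ‖w‖ ^ 2)) := by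
    funext w
    rw [Complex.norm_exp]
    congr 1
    have : (-((1 / (8 * t) : ℝ) : ℂ) * (‖w‖ : ℂ) ^ 2 + 0 * ((inner ℝ (0 : EuclideanSpace ℝ (Fin N)) w : ℝ) : ℂ)) =
        (((-(1 / (8 * t)) * ‖w‖ ^ 2 : ℝ)) : ℂ) := by push_cast; ring
    rw [this, Complex.ofReal_re]
  rwa [he] at h

lemma integral_gauss (ht : 0 < t) :
    ∫ w : EuclideanSpace ℝ (Fin N), exp (-(1 / (8 * t)) * ‖w‖ ^ 2) =
      (8 * π * t) ^ ((N : ℝ) / 2) := by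
  have hb : (0:ℝ) < 1 / (8 * t) := by positivity
  have h := GaussianFourier.integral_rexp_neg_mul_sq_norm
    (V := EuclideanSpace ℝ (Fin N)) hb
  simp only [neg_mul] at h ⊢
  rw [h, finrank_euclideanSpace_fin]
  congr 1
  field_simp


lemma continuous_Fg (a v : EuclideanSpace ℝ (Fin N)) :
    Continuous (fun s : ℝ => heatKernel N t (a - s • v)) := by
  have : Differentiable ℝ (fun s : ℝ => heatKernel N t (a - s • v)) :=
    fun s => (hasDerivAt_F (t := t) a v s).differentiableAt
  exact this.continuous

lemma continuous_F1 (a v : EuclideanSpace ℝ (Fin N)) :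
    Continuous (F1 N t a v) := by
  have : Differentiable ℝ (F1 N t a v) :=
    fun s => (hasDerivAt_F1 (t := t) a v s).differentiableAt
  exact this.continuous

lemma continuous_F2 (a v : EuclideanSpace ℝ (Fin N)) :
    Continuous (F2 N t a v) := by
  unfold F2
  exact ((continuous_Fg a v).mul (by fun_prop))

/-- the remainder in the first-order Taylor expansion of the kernel around the center of mass -/
noncomputable def Erem (N : ℕ) (t : ℝ) (xc x y : EuclideanSpace ℝ (Fin N)) : ℝ :=
  heatKernel N t (x - y) - heatKernel N t (x - xc) -
    heatKernel N t (x - xc) * (⟪x - xc, y - xc⟫ / (2 * t))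

lemma Erem_eq (ht : 0 < t) (xc x y : EuclideanSpace ℝ (Fin N)) :
    Erem N t xc x y =
      heatKernel N t ((x - xc) - (1 : ℝ) • (y - xc)) -
        heatKernel N t ((x - xc) - (0 : ℝ) • (y - xc)) - F1 N t (x - xc) (y - xc) 0 := by
  have h1 : (x - xc) - (1 : ℝ) • (y - xc) = x - y := by
    rw [one_smul]; abel
  have h0 : (x - xc) - (0 : ℝ) • (y - xc) = x - xc := by
    rw [zero_smul, sub_zero]
  rw [h1, h0, Erem, F1, h0]
  have : (2 * ⟪x - xc, y - xc⟫ - 2 * 0 * ‖y - xc‖ ^ 2) / (4 * t) =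
      ⟪x - xc, y - xc⟫ / (2 * t) := by
    field_simp; ring
  rw [this]

lemma F1_sub_F1_zero_le (ht : 0 < t) (a v : EuclideanSpace ℝ (Fin N)) {K : ℝ}
    (hK : ∀ s ∈ Set.Icc (0:ℝ) 1, |F2 N t a v s| ≤ K) (s : ℝ) (hs : s ∈ Set.Icc (0:ℝ) 1) :
    |F1 N t a v s - F1 N t a v 0| ≤ K * s := by
  have hder : ∀ u ∈ Set.Icc (0:ℝ) 1,
      HasDerivWithinAt (F1 N t a v) (F2 N t a v u) (Set.Icc (0:ℝ) 1) u :=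
    fun u _ => (hasDerivAt_F1 (t := t) a v u).hasDerivWithinAt
  have := (convex_Icc (0:ℝ) 1).norm_image_sub_le_of_norm_hasDerivWithin_le hder
    (fun u hu => by simpa using hK u hu) (Set.left_mem_Icc.mpr zero_le_one) hs
  simpa [abs_of_nonneg hs.1] using this

lemma Erem_abs_le_sup (ht : 0 < t) (xc x y : EuclideanSpace ℝ (Fin N)) {K : ℝ}
    (hK : ∀ s ∈ Set.Icc (0:ℝ) 1, |F2 N t (x - xc) (y - xc) s| ≤ K) :
    |Erem N t xc x y| ≤ K := by
  have hK0 : 0 ≤ K := le_trans (abs_nonneg _) (hK 0 (by norm_num))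
  set a := x - xc
  set v := y - xc
  set g : ℝ → ℝ := fun s => heatKernel N t (a - s • v) - heatKernel N t (a - (0:ℝ) • v) -
    s * F1 N t a v 0 with hg
  have hgder : ∀ s ∈ Set.Icc (0:ℝ) 1,
      HasDerivWithinAt g (F1 N t a v s - F1 N t a v 0) (Set.Icc (0:ℝ) 1) s := by
    intro s _
    have h := ((hasDerivAt_F (t := t) a v s).sub_const
      (heatKernel N t (a - (0:ℝ) • v))).sub
      ((hasDerivAt_id s).mul_const (F1 N t a v 0))
    have h2 : F1 N t a v s - 1 * F1 N t a v 0 = F1 N t a v s - F1 N t a v 0 := by ring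
    rw [← h2]
    exact h.hasDerivWithinAt
  have hbound : ∀ s ∈ Set.Icc (0:ℝ) 1, ‖F1 N t a v s - F1 N t a v 0‖ ≤ K := by
    intro s hs
    have := F1_sub_F1_zero_le ht a v hK s hs
    have h2 : K * s ≤ K := by nlinarith [hs.1, hs.2]
    simpa using this.trans h2
  have hmv := (convex_Icc (0:ℝ) 1).norm_image_sub_le_of_norm_hasDerivWithin_le hgder
    hbound (Set.left_mem_Icc.mpr zero_le_one) (Set.right_mem_Icc.mpr zero_le_one)
  have hg0 : g 0 = 0 := by simp [hg]
  have hg1 : g 1 = Erem N t xc x y := by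
    rw [hg]
    simp only
    rw [Erem_eq ht xc x y]
    ring
  rw [hg0, sub_zero, hg1] at hmv
  simpa using hmv

lemma Erem_abs_le_int (ht : 0 < t) (xc x y : EuclideanSpace ℝ (Fin N)) :
    |Erem N t xc x y| ≤
      ‖y - xc‖ ^ 2 * ∫ σ in (0:ℝ)..1, Hfun N t ((x - xc) - σ • (y - xc)) := by
  set a := x - xc
  set v := y - xc
  -- FTC for F1
  have hF2int : IntervalIntegrable (F2 N t a v) volume 0 1 :=
    (continuous_F2 a v).intervalIntegrable 0 1
  have habs2int : IntervalIntegrable (fun σ => |F2 N t a v σ|) volume 0 1 :=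
    (continuous_F2 a v).abs.intervalIntegrable 0 1
  have hHint : IntervalIntegrable (fun σ => Hfun N t (a - σ • v)) volume 0 1 := by
    apply Continuous.intervalIntegrable
    exact (Hfun_continuous ht).comp (by fun_prop)
  have hstep : ∀ s ∈ Set.Icc (0:ℝ) 1,
      |F1 N t a v s - F1 N t a v 0| ≤ ∫ σ in (0:ℝ)..1, |F2 N t a v σ| := by
    intro s hs
    have hftc : ∫ σ in (0:ℝ)..s, F2 N t a v σ = F1 N t a v s - F1 N t a v 0 :=
      intervalIntegral.integral_eq_sub_of_hasDerivAt
        (fun u _ => hasDerivAt_F1 (t := t) a v u)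
        ((continuous_F2 a v).intervalIntegrable 0 s)
    rw [← hftc]
    calc |∫ σ in (0:ℝ)..s, F2 N t a v σ| ≤ ∫ σ in (0:ℝ)..s, |F2 N t a v σ| :=
          intervalIntegral.abs_integral_le_integral_abs hs.1
      _ ≤ ∫ σ in (0:ℝ)..1, |F2 N t a v σ| := by
          apply intervalIntegral.integral_mono_interval le_rfl hs.1 hs.2
          · exact Eventually.of_forall (fun σ => abs_nonneg _)
          · exact habs2int
  -- FTC for g as in previous lemma
  have hgftc : Erem N t xc x y = ∫ s in (0:ℝ)..1, (F1 N t a v s - F1 N t a v 0) := by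
    have h := intervalIntegral.integral_eq_sub_of_hasDerivAt
      (f := fun s => heatKernel N t (a - s • v) - s * F1 N t a v 0)
      (f' := fun s => F1 N t a v s - F1 N t a v 0)
      (fun s _ => by
        have h := (hasDerivAt_F (t := t) a v s).sub
          ((hasDerivAt_id s).mul_const (F1 N t a v 0))
        show HasDerivAt _ (F1 N t a v s - F1 N t a v 0) s
        refine h.congr_deriv ?_
        ring)
      (((continuous_F1 a v).sub continuous_const).intervalIntegrable 0 1)
    rw [Erem_eq ht xc x y]
    rw [h]
    simp only [zero_smul, sub_zero, one_smul]
    ring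
  rw [hgftc]
  calc |∫ s in (0:ℝ)..1, (F1 N t a v s - F1 N t a v 0)|
      ≤ ∫ s in (0:ℝ)..1, |F1 N t a v s - F1 N t a v 0| :=
        intervalIntegral.abs_integral_le_integral_abs zero_le_one
    _ ≤ ∫ s in (0:ℝ)..1, (∫ σ in (0:ℝ)..1, |F2 N t a v σ|) := by
        apply intervalIntegral.integral_mono_on zero_le_one
          (((continuous_F1 a v).sub continuous_const).abs.intervalIntegrable 0 1)
          (intervalIntegrable_const) hstep
    _ = ∫ σ in (0:ℝ)..1, |F2 N t a v σ| := by
        rw [intervalIntegral.integral_const]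
        simp
    _ ≤ ∫ σ in (0:ℝ)..1, ‖v‖ ^ 2 * Hfun N t (a - σ • v) := by
        apply intervalIntegral.integral_mono_on zero_le_one habs2int
          (hHint.const_mul _)
        intro σ _
        exact F2_abs_le ht a v σ
    _ = ‖v‖ ^ 2 * ∫ σ in (0:ℝ)..1, Hfun N t (a - σ • v) := by
        rw [← intervalIntegral.integral_const_mul]

section Main

variable {N : ℕ} {t : ℝ} {u₀ : EuclideanSpace ℝ (Fin N) → ℝ}
  {xc : EuclideanSpace ℝ (Fin N)}

local notation "ℰ" => EuclideanSpace ℝ (Fin N)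

lemma hk_le_c (ht : 0 < t) (z : ℰ) :
    heatKernel N t z ≤ (4 * π * t) ^ (-(N : ℝ) / 2) := by
  rw [heatKernel]
  have h1 : exp (-‖z‖ ^ 2 / (4 * t)) ≤ 1 := by
    apply exp_le_one_iff.mpr
    rw [neg_div]
    exact neg_nonpos.mpr (by positivity)
  calc (4 * π * t) ^ (-(N : ℝ) / 2) * exp (-‖z‖ ^ 2 / (4 * t)) ≤
      (4 * π * t) ^ (-(N : ℝ) / 2) * 1 := mul_le_mul_of_nonneg_left h1 (c_pos ht).le
    _ = (4 * π * t) ^ (-(N : ℝ) / 2) := mul_one _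

lemma continuous_hk (ht : 0 < t) : Continuous (heatKernel N t) := by
  unfold heatKernel
  fun_prop

lemma int_c2 (hm : StronglyMeasurable u₀) (h0 : ∀ y, 0 ≤ u₀ y) (hu : Integrable u₀)
    (hI2 : Integrable (fun y => ‖y‖ ^ 2 * u₀ y)) (z : ℰ) :
    Integrable (fun y => ‖y - z‖ ^ 2 * u₀ y) := by
  apply Integrable.mono' ((hI2.const_mul 2).add (hu.const_mul (2 * ‖z‖ ^ 2)))
  · exact ((((continuous_id.sub continuous_const).norm.pow 2).stronglyMeasurable).mul
      hm).aestronglyMeasurable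
  · refine Eventually.of_forall fun y => ?_
    have hb : ‖y - z‖ ≤ ‖y‖ + ‖z‖ := norm_sub_le y z
    have h1 : ‖y - z‖ ^ 2 ≤ 2 * ‖y‖ ^ 2 + 2 * ‖z‖ ^ 2 := by
      nlinarith [hb, norm_nonneg (y - z), norm_nonneg y, norm_nonneg z, sq_nonneg (‖y‖ - ‖z‖)]
    rw [Real.norm_eq_abs, abs_of_nonneg (mul_nonneg (sq_nonneg _) (h0 y))]
    simp only [Pi.add_apply]
    nlinarith [mul_le_mul_of_nonneg_right h1 (h0 y)]

lemma int_smulsub (hm : StronglyMeasurable u₀) (h0 : ∀ y, 0 ≤ u₀ y) (hu : Integrable u₀)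
    (hI2 : Integrable (fun y => ‖y‖ ^ 2 * u₀ y)) (z : ℰ) :
    Integrable (fun y => u₀ y • (y - z)) := by
  apply Integrable.mono' (hu.add (int_c2 hm h0 hu hI2 z))
  · exact (hm.smul ((continuous_id.sub continuous_const).stronglyMeasurable)).aestronglyMeasurable
  · refine Eventually.of_forall fun y => ?_
    rw [norm_smul, Real.norm_eq_abs, abs_of_nonneg (h0 y)]
    have h1 : ‖y - z‖ ≤ 1 + ‖y - z‖ ^ 2 := by
      nlinarith [norm_nonneg (y - z), sq_nonneg (‖y - z‖ - 1)]
    simp only [Pi.add_apply]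
    nlinarith [mul_le_mul_of_nonneg_left h1 (h0 y)]

lemma moment_zero (hm : StronglyMeasurable u₀) (h0 : ∀ y, 0 ≤ u₀ y) (hu : Integrable u₀)
    (hI2 : Integrable (fun y => ‖y‖ ^ 2 * u₀ y)) {M : ℝ} (hM : M = ∫ y, u₀ y) (hMpos : 0 < M)
    (hxc : xc = (1 / M) • ∫ y : ℰ, u₀ y • y) :
    ∫ y : ℰ, u₀ y • (y - xc) = 0 := by
  have hsy : Integrable (fun y : ℰ => u₀ y • y) := by
    have := int_smulsub hm h0 hu hI2 (0 : ℰ)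
    simpa using this
  have hsplit : ∫ y : ℰ, u₀ y • (y - xc) = (∫ y : ℰ, u₀ y • y) - (∫ y, u₀ y) • xc := by
    rw [← integral_smul_const]
    rw [← integral_sub hsy (hu.smul_const xc)]
    congr 1
    funext y
    rw [smul_sub]
  rw [hsplit, ← hM]
  have : M • xc = ∫ y : ℰ, u₀ y • y := by
    rw [hxc, smul_smul]
    rw [mul_one_div, div_self hMpos.ne', one_smul]
  rw [← this, sub_self]

lemma kernel_mul_integrable (ht : 0 < t) (hm : StronglyMeasurable u₀) (h0 : ∀ y, 0 ≤ u₀ y)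
    (hu : Integrable u₀) (x : ℰ) :
    Integrable (fun y => heatKernel N t (x - y) * u₀ y) := by
  apply Integrable.mono' (hu.const_mul ((4 * π * t) ^ (-(N : ℝ) / 2)))
  · exact (((continuous_hk ht).comp (continuous_const.sub continuous_id)).stronglyMeasurable.mul
      hm).aestronglyMeasurable
  · refine Eventually.of_forall fun y => ?_
    rw [Real.norm_eq_abs, abs_mul, abs_of_pos (hk_pos ht _), abs_of_nonneg (h0 y)]
    exact mul_le_mul_of_nonneg_right (hk_le_c ht _) (h0 y)

lemma inner_term_integrable (hm : StronglyMeasurable u₀) (h0 : ∀ y, 0 ≤ u₀ y)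
    (hu : Integrable u₀) (hI2 : Integrable (fun y => ‖y‖ ^ 2 * u₀ y)) (a : ℰ) :
    Integrable (fun y : ℰ => ⟪a, u₀ y • (y - xc)⟫) :=
  ContinuousLinearMap.integrable_comp (innerSL ℝ a) (int_smulsub hm h0 hu hI2 xc)

lemma key_identity (ht : 0 < t) (hm : StronglyMeasurable u₀) (h0 : ∀ y, 0 ≤ u₀ y)
    (hu : Integrable u₀) (hI2 : Integrable (fun y => ‖y‖ ^ 2 * u₀ y))
    {M : ℝ} (hM : M = ∫ y, u₀ y) (hMpos : 0 < M)
    (hxc : xc = (1 / M) • ∫ y : ℰ, u₀ y • y) (x : ℰ) :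
    heatSol N u₀ x t - M * heatKernel N t (x - xc) = ∫ y, Erem N t xc x y * u₀ y := by
  have hptw : (fun y => Erem N t xc x y * u₀ y) = fun y =>
      heatKernel N t (x - y) * u₀ y - (heatKernel N t (x - xc) * u₀ y +
        (heatKernel N t (x - xc) * (1 / (2 * t))) * ⟪x - xc, u₀ y • (y - xc)⟫) := by
    funext y
    rw [Erem, real_inner_smul_right]
    ring
  have hint2 : Integrable (fun y : ℰ => heatKernel N t (x - xc) * u₀ y) :=
    hu.const_mul _
  have hint3 : Integrable (fun y : ℰ =>
      (heatKernel N t (x - xc) * (1 / (2 * t))) * ⟪x - xc, u₀ y • (y - xc)⟫) :=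
    (inner_term_integrable hm h0 hu hI2 (x - xc)).const_mul _
  have hint23 : Integrable (fun y : ℰ => heatKernel N t (x - xc) * u₀ y +
      (heatKernel N t (x - xc) * (1 / (2 * t))) * ⟪x - xc, u₀ y • (y - xc)⟫) :=
    hint2.add hint3
  rw [hptw, integral_sub (kernel_mul_integrable ht hm h0 hu x) hint23,
    integral_add hint2 hint3,
    integral_const_mul, integral_const_mul, integral_inner (int_smulsub hm h0 hu hI2 xc),
    moment_zero hm h0 hu hI2 hM hMpos hxc, inner_zero_right, mul_zero, add_zero,
    heatSol, ← hM]
  ring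

lemma Erem_cont (ht : 0 < t) :
    Continuous (fun p : ℰ × ℰ => Erem N t xc p.1 p.2) := by
  unfold Erem
  have h1 := continuous_hk (N := N) ht
  have h2 : Continuous fun p : ℰ × ℰ => heatKernel N t (p.1 - p.2) :=
    h1.comp (continuous_fst.sub continuous_snd)
  have h3 : Continuous fun p : ℰ × ℰ => heatKernel N t (p.1 - xc) :=
    h1.comp (continuous_fst.sub continuous_const)
  have h4 : Continuous fun p : ℰ × ℰ => (⟪p.1 - xc, p.2 - xc⟫ : ℝ) :=
    (continuous_fst.sub continuous_const).inner (continuous_snd.sub continuous_const)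
  exact (h2.sub h3).sub (h3.mul (h4.div_const _))

lemma Erem_sup_ptwise (ht : 0 < t) (x y : ℰ) :
    |Erem N t xc x y| ≤
      ((3 / 2) * (4 * π) ^ (-(N : ℝ) / 2) * t ^ (-((N : ℝ) + 2) / 2)) * (‖y - xc‖ ^ 2) := by
  have h := Erem_abs_le_sup (xc := xc) (x := x) (y := y) ht
    (K := ‖y - xc‖ ^ 2 * ((3 / 2) * (4 * π) ^ (-(N : ℝ) / 2) * t ^ (-((N : ℝ) + 2) / 2)))
    (fun s _ => (F2_abs_le ht _ _ s).trans
      (mul_le_mul_of_nonneg_left (Hfun_le_sup ht _) (sq_nonneg _)))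
  linarith [h]

lemma sup_bound (ht : 0 < t) (hm : StronglyMeasurable u₀) (h0 : ∀ y, 0 ≤ u₀ y)
    (hu : Integrable u₀) (hI2 : Integrable (fun y => ‖y‖ ^ 2 * u₀ y))
    {M : ℝ} (hM : M = ∫ y, u₀ y) (hMpos : 0 < M)
    (hxc : xc = (1 / M) • ∫ y : ℰ, u₀ y • y) (x : ℰ) :
    |heatSol N u₀ x t - M * heatKernel N t (x - xc)| ≤
      ((3 / 2) * (4 * π) ^ (-(N : ℝ) / 2)) * (∫ y, ‖y - xc‖ ^ 2 * u₀ y) *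
        t ^ (-((N : ℝ) + 2) / 2) := by
  rw [key_identity ht hm h0 hu hI2 hM hMpos hxc x]
  have h1 : |∫ y, Erem N t xc x y * u₀ y| ≤ ∫ y, |Erem N t xc x y * u₀ y| := by
    have := norm_integral_le_integral_norm (μ := volume) (fun y => Erem N t xc x y * u₀ y)
    simpa only [Real.norm_eq_abs] using this
  refine h1.trans ?_
  have h2 : ∫ y, |Erem N t xc x y * u₀ y| ≤
      ∫ y, ((3 / 2) * (4 * π) ^ (-(N : ℝ) / 2) * t ^ (-((N : ℝ) + 2) / 2)) *
        (‖y - xc‖ ^ 2 * u₀ y) := by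
    apply integral_mono_of_nonneg (Eventually.of_forall fun y => abs_nonneg _)
      ((int_c2 hm h0 hu hI2 xc).const_mul _)
    refine Eventually.of_forall fun y => ?_
    show |Erem N t xc x y * u₀ y| ≤
      3 / 2 * (4 * π) ^ (-(N:ℝ) / 2) * t ^ (-((N:ℝ) + 2) / 2) * (‖y - xc‖ ^ 2 * u₀ y)
    rw [abs_mul, abs_of_nonneg (h0 y)]
    calc |Erem N t xc x y| * u₀ y ≤
        (((3 / 2) * (4 * π) ^ (-(N : ℝ) / 2) * t ^ (-((N : ℝ) + 2) / 2)) * ‖y - xc‖ ^ 2) * u₀ y :=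
          mul_le_mul_of_nonneg_right (Erem_sup_ptwise ht x y) (h0 y)
      _ = ((3 / 2) * (4 * π) ^ (-(N : ℝ) / 2) * t ^ (-((N : ℝ) + 2) / 2)) *
          (‖y - xc‖ ^ 2 * u₀ y) := by ring
  refine h2.trans ?_
  rw [integral_const_mul]
  apply le_of_eq
  ring

lemma lint_Hfun_le (ht : 0 < t) :
    ∫⁻ w : ℰ, ENNReal.ofReal (Hfun N t w) ≤
      ENNReal.ofReal ((5 / 2) * 2 ^ ((N : ℝ) / 2) / t) := by
  set a₀ : ℝ := (5 / 2) * ((4 * π * t) ^ (-(N : ℝ) / 2) / t) with ha₀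
  have ha₀pos : 0 < a₀ := by
    have := c_pos (N := N) ht
    positivity
  have hint : Integrable (fun w : ℰ => a₀ * exp (-(1 / (8 * t)) * ‖w‖ ^ 2)) :=
    (integrable_gauss ht).const_mul a₀
  have hmono : ∫⁻ w : ℰ, ENNReal.ofReal (Hfun N t w) ≤
      ∫⁻ w : ℰ, ENNReal.ofReal (a₀ * exp (-(1 / (8 * t)) * ‖w‖ ^ 2)) :=
    lintegral_mono fun w => ENNReal.ofReal_le_ofReal (Hfun_le_hat ht w)
  refine hmono.trans ?_
  rw [← ofReal_integral_eq_lintegral_ofReal hint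
    (Eventually.of_forall fun w => by positivity)]
  apply ENNReal.ofReal_le_ofReal
  rw [integral_const_mul, integral_gauss ht]
  apply le_of_eq
  have key : (4 * π * t) ^ (-(N : ℝ) / 2) * (8 * π * t) ^ ((N : ℝ) / 2) =
      2 ^ ((N : ℝ) / 2) := by
    rw [show -(N : ℝ) / 2 = -((N : ℝ) / 2) by ring, Real.rpow_neg (by positivity),
      inv_mul_eq_div, ← Real.div_rpow (by positivity) (by positivity)]
    congr 1
    have hπ := pi_pos
    field_simp
    ring
  rw [ha₀]
  field_simp
  rw [show -((N:ℝ) / 2) = -(N:ℝ) / 2 by ring, show π * t * 8 = 8 * π * t by ring]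
  nlinarith [key, c_pos (N := N) ht, Real.rpow_pos_of_pos (show (0:ℝ) < 8*π*t by positivity) ((N:ℝ)/2), Real.rpow_pos_of_pos (show (0:ℝ) < 2 by norm_num) ((N:ℝ)/2)]

lemma lint_Erem_le (ht : 0 < t) (y : ℰ) :
    ∫⁻ x : ℰ, ENNReal.ofReal |Erem N t xc x y| ≤
      ENNReal.ofReal (‖y - xc‖ ^ 2 * ((5 / 2) * 2 ^ ((N : ℝ) / 2) / t)) := by
  set v := y - xc with hv
  set C2t : ℝ := (5 / 2) * 2 ^ ((N : ℝ) / 2) / t with hC2t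
  have hC2tpos : 0 < C2t := by
    have : (0:ℝ) < 2 ^ ((N : ℝ) / 2) := Real.rpow_pos_of_pos (by norm_num) _
    positivity
  have step1 : ∫⁻ x : ℰ, ENNReal.ofReal |Erem N t xc x y| ≤
      ∫⁻ x : ℰ, ENNReal.ofReal (‖v‖ ^ 2) *
        ∫⁻ σ in Set.Ioc (0:ℝ) 1, ENNReal.ofReal (Hfun N t (x - xc - σ • v)) := by
    apply lintegral_mono
    intro x
    have h1 := Erem_abs_le_int ht xc x y
    have h2 := ENNReal.ofReal_le_ofReal h1
    rw [ENNReal.ofReal_mul (sq_nonneg _)] at h2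
    have hIcont : Continuous fun σ : ℝ => Hfun N t (x - xc - σ • v) :=
      (Hfun_continuous ht).comp (by fun_prop)
    have hIconv : ENNReal.ofReal (∫ σ in (0:ℝ)..1, Hfun N t (x - xc - σ • v)) =
        ∫⁻ σ in Set.Ioc (0:ℝ) 1, ENNReal.ofReal (Hfun N t (x - xc - σ • v)) := by
      rw [intervalIntegral.integral_of_le zero_le_one]
      exact ofReal_integral_eq_lintegral_ofReal (hIcont.integrableOn_Ioc)
        (Eventually.of_forall fun σ => Hfun_nonneg ht _)
    rw [hIconv] at h2
    exact h2
  refine step1.trans ?_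
  have hswap : ∫⁻ x : ℰ, ∫⁻ σ in Set.Ioc (0:ℝ) 1,
      ENNReal.ofReal (Hfun N t (x - xc - σ • v)) =
      ∫⁻ σ in Set.Ioc (0:ℝ) 1, ∫⁻ x : ℰ,
        ENNReal.ofReal (Hfun N t (x - xc - σ • v)) := by
    apply lintegral_lintegral_swap
    apply Measurable.aemeasurable
    apply Measurable.ennreal_ofReal
    exact ((Hfun_continuous ht).comp (by fun_prop :
      Continuous fun p : ℰ × ℝ => p.1 - xc - p.2 • v)).measurable
  calc ∫⁻ x : ℰ, ENNReal.ofReal (‖v‖ ^ 2) *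
        ∫⁻ σ in Set.Ioc (0:ℝ) 1, ENNReal.ofReal (Hfun N t (x - xc - σ • v))
      = ENNReal.ofReal (‖v‖ ^ 2) * ∫⁻ x : ℰ,
          ∫⁻ σ in Set.Ioc (0:ℝ) 1, ENNReal.ofReal (Hfun N t (x - xc - σ • v)) := by
        rw [lintegral_const_mul' _ _ ENNReal.ofReal_ne_top]
    _ = ENNReal.ofReal (‖v‖ ^ 2) * ∫⁻ σ in Set.Ioc (0:ℝ) 1,
          ∫⁻ x : ℰ, ENNReal.ofReal (Hfun N t (x - xc - σ • v)) := by rw [hswap]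
    _ ≤ ENNReal.ofReal (‖v‖ ^ 2) * ∫⁻ _σ in Set.Ioc (0:ℝ) 1, ENNReal.ofReal C2t := by
        apply mul_le_mul_right
        apply lintegral_mono
        intro σ
        show (∫⁻ x : ℰ, ENNReal.ofReal (Hfun N t (x - xc - σ • v))) ≤ ENNReal.ofReal C2t
        have htrans : ∫⁻ x : ℰ, ENNReal.ofReal (Hfun N t (x - xc - σ • v)) =
            ∫⁻ x : ℰ, ENNReal.ofReal (Hfun N t x) := by
          have he : ∀ x : ℰ, x - xc - σ • v = x - (xc + σ • v) := fun x => by rw [sub_sub]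
          simp_rw [he]
          exact lintegral_sub_right_eq_self (fun x => ENNReal.ofReal (Hfun N t x)) (xc + σ • v)
        rw [htrans]
        exact lint_Hfun_le ht
    _ = ENNReal.ofReal (‖v‖ ^ 2) * ENNReal.ofReal C2t := by
        rw [setLIntegral_const, Real.volume_Ioc]
        norm_num
    _ = ENNReal.ofReal (‖v‖ ^ 2 * C2t) := by
        rw [← ENNReal.ofReal_mul (sq_nonneg _)]

lemma heatSol_aesm (ht : 0 < t) (hm : StronglyMeasurable u₀) :
    AEStronglyMeasurable (fun x => heatSol N u₀ x t) volume := by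
  have hk' : StronglyMeasurable fun p : ℰ × ℰ => heatKernel N t (p.1 - p.2) * u₀ p.2 :=
    (((continuous_hk ht).comp (continuous_fst.sub continuous_snd)).stronglyMeasurable).mul
      (hm.comp_measurable measurable_snd)
  exact (hk'.integral_prod_right').aestronglyMeasurable

lemma L1_bound (ht : 0 < t) (hm : StronglyMeasurable u₀) (h0 : ∀ y, 0 ≤ u₀ y)
    (hu : Integrable u₀) (hI2 : Integrable (fun y => ‖y‖ ^ 2 * u₀ y))
    {M : ℝ} (hM : M = ∫ y, u₀ y) (hMpos : 0 < M)
    (hxc : xc = (1 / M) • ∫ y : ℰ, u₀ y • y) :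
    (∫ x, |heatSol N u₀ x t - M * heatKernel N t (x - xc)|) ≤
      ((5 / 2) * 2 ^ ((N : ℝ) / 2)) * (∫ y, ‖y - xc‖ ^ 2 * u₀ y) * t ^ (-(1:ℝ)) := by
  set C2t : ℝ := (5 / 2) * 2 ^ ((N : ℝ) / 2) / t with hC2t
  have h2pow : (0:ℝ) < 2 ^ ((N : ℝ) / 2) := Real.rpow_pos_of_pos (by norm_num) _
  have hC2tpos : 0 < C2t := by positivity
  set D : ℰ → ℝ := fun x => heatSol N u₀ x t - M * heatKernel N t (x - xc) with hD
  have hDsm : AEStronglyMeasurable D volume :=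
    (heatSol_aesm ht hm).sub
      ((continuous_const.mul ((continuous_hk ht).comp
        (continuous_id.sub continuous_const))).aestronglyMeasurable)
  have hDabs : AEStronglyMeasurable (fun x => |D x|) volume := by
    have := hDsm.norm
    simpa only [Real.norm_eq_abs] using this
  -- pointwise domination of |D| by the Erem integral
  have hEint : ∀ x : ℰ, Integrable (fun y => |Erem N t xc x y| * u₀ y) := by
    intro x
    apply Integrable.mono' ((int_c2 hm h0 hu hI2 xc).const_mul
      ((3 / 2) * (4 * π) ^ (-(N : ℝ) / 2) * t ^ (-((N : ℝ) + 2) / 2)))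
    · exact ((((Erem_cont (xc := xc) ht).comp
        (continuous_const.prodMk continuous_id)).abs.stronglyMeasurable).mul
        hm).aestronglyMeasurable
    · refine Eventually.of_forall fun y => ?_
      rw [Real.norm_eq_abs, abs_of_nonneg (mul_nonneg (abs_nonneg _) (h0 y))]
      calc |Erem N t xc x y| * u₀ y ≤
          ((3 / 2) * (4 * π) ^ (-(N : ℝ) / 2) * t ^ (-((N : ℝ) + 2) / 2)) * ‖y - xc‖ ^ 2 *
            u₀ y := mul_le_mul_of_nonneg_right (Erem_sup_ptwise ht x y) (h0 y)
        _ = ((3 / 2) * (4 * π) ^ (-(N : ℝ) / 2) * t ^ (-((N : ℝ) + 2) / 2)) *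
            (‖y - xc‖ ^ 2 * u₀ y) := by ring
  have hDle : ∀ x : ℰ, |D x| ≤ ∫ y, |Erem N t xc x y| * u₀ y := by
    intro x
    rw [hD]
    simp only
    rw [key_identity ht hm h0 hu hI2 hM hMpos hxc x]
    have h1 : |∫ y, Erem N t xc x y * u₀ y| ≤ ∫ y, |Erem N t xc x y * u₀ y| := by
      have := norm_integral_le_integral_norm (μ := volume) (fun y => Erem N t xc x y * u₀ y)
      simpa only [Real.norm_eq_abs] using this
    refine h1.trans (le_of_eq ?_)
    congr 1
    funext y
    rw [abs_mul, abs_of_nonneg (h0 y)]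
  -- lintegral chain
  have hchain : ∫⁻ x : ℰ, ENNReal.ofReal |D x| ≤
      ENNReal.ofReal (∫ y, ‖y - xc‖ ^ 2 * u₀ y * C2t) := by
    calc ∫⁻ x : ℰ, ENNReal.ofReal |D x|
        ≤ ∫⁻ x : ℰ, ENNReal.ofReal (∫ y, |Erem N t xc x y| * u₀ y) :=
          lintegral_mono fun x => ENNReal.ofReal_le_ofReal (hDle x)
      _ = ∫⁻ x : ℰ, ∫⁻ y : ℰ, ENNReal.ofReal (|Erem N t xc x y| * u₀ y) := by
          apply lintegral_congr
          intro x
          exact ofReal_integral_eq_lintegral_ofReal (hEint x)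
            (Eventually.of_forall fun y => mul_nonneg (abs_nonneg _) (h0 y))
      _ = ∫⁻ y : ℰ, ∫⁻ x : ℰ, ENNReal.ofReal (|Erem N t xc x y| * u₀ y) := by
          apply lintegral_lintegral_swap
          apply Measurable.aemeasurable
          apply Measurable.ennreal_ofReal
          exact ((Erem_cont (xc := xc) ht).abs.measurable).mul
            (hm.measurable.comp measurable_snd)
      _ ≤ ∫⁻ y : ℰ, ENNReal.ofReal (‖y - xc‖ ^ 2 * u₀ y * C2t) := by
          apply lintegral_mono
          intro y
          calc ∫⁻ x : ℰ, ENNReal.ofReal (|Erem N t xc x y| * u₀ y)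
              = ∫⁻ x : ℰ, ENNReal.ofReal |Erem N t xc x y| * ENNReal.ofReal (u₀ y) := by
                simp_rw [ENNReal.ofReal_mul (abs_nonneg _)]
            _ = (∫⁻ x : ℰ, ENNReal.ofReal |Erem N t xc x y|) * ENNReal.ofReal (u₀ y) :=
                lintegral_mul_const' _ _ ENNReal.ofReal_ne_top
            _ ≤ ENNReal.ofReal (‖y - xc‖ ^ 2 * C2t) * ENNReal.ofReal (u₀ y) :=
                mul_le_mul_left (lint_Erem_le ht y) _
            _ = ENNReal.ofReal (‖y - xc‖ ^ 2 * u₀ y * C2t) := by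
                rw [← ENNReal.ofReal_mul (mul_nonneg (sq_nonneg _) hC2tpos.le)]
                congr 1
                ring
      _ = ENNReal.ofReal (∫ y, ‖y - xc‖ ^ 2 * u₀ y * C2t) := by
          rw [ofReal_integral_eq_lintegral_ofReal ((int_c2 hm h0 hu hI2 xc).mul_const C2t)
            (Eventually.of_forall fun y =>
              mul_nonneg (mul_nonneg (sq_nonneg _) (h0 y)) hC2tpos.le)]
  have hRHSnn : 0 ≤ ∫ y, ‖y - xc‖ ^ 2 * u₀ y * C2t :=
    integral_nonneg fun y => mul_nonneg (mul_nonneg (sq_nonneg _) (h0 y)) hC2tpos.le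
  have hfinal : (∫ x, |D x|) ≤ ∫ y, ‖y - xc‖ ^ 2 * u₀ y * C2t := by
    rw [integral_eq_lintegral_of_nonneg_ae (Eventually.of_forall fun x => abs_nonneg (D x))
      hDabs]
    calc (∫⁻ x : ℰ, ENNReal.ofReal |D x|).toReal
        ≤ (ENNReal.ofReal (∫ y, ‖y - xc‖ ^ 2 * u₀ y * C2t)).toReal :=
          ENNReal.toReal_mono ENNReal.ofReal_ne_top hchain
      _ = ∫ y, ‖y - xc‖ ^ 2 * u₀ y * C2t := ENNReal.toReal_ofReal hRHSnn
  refine hfinal.trans (le_of_eq ?_)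
  rw [integral_mul_const, Real.rpow_neg_one]
  rw [hC2t]
  ring

end Main

end HeatAux



/-- Centered second-moment rates: translating to the center of mass `x_c`,
`|u(x,t) − M·G_t(x−x_c)| ≤ C·𝒩₂*·t^{-(N+2)/2}` and
`‖u(·,t) − M·G_t(·−x_c)‖_{L¹} ≤ C·𝒩₂*·t^{-1}`, with `C = C(N)`. -/
theorem heat_convergence_rate_centered (N : ℕ) (hN : 1 ≤ N) :
    ∃ C : ℝ, 0 < C ∧ ∀ u₀ : EuclideanSpace ℝ (Fin N) → ℝ,
      Integrable u₀ → (∀ y, 0 ≤ u₀ y) →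
      Integrable (fun y => ‖y‖ ^ 2 * u₀ y) →
      ∀ M : ℝ, M = ∫ y, u₀ y → 0 < M →
      ∀ xc : EuclideanSpace ℝ (Fin N),
        xc = (1 / M) • ∫ y : EuclideanSpace ℝ (Fin N), u₀ y • y →
      ∀ t : ℝ, 0 < t →
        (∀ x : EuclideanSpace ℝ (Fin N),
            |heatSol N u₀ x t - M * heatKernel N t (x - xc)| ≤
              C * (∫ y, ‖y - xc‖ ^ 2 * u₀ y) * t ^ (-((N : ℝ) + 2) / 2)) ∧
          (∫ x, |heatSol N u₀ x t - M * heatKernel N t (x - xc)|) ≤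
            C * (∫ y, ‖y - xc‖ ^ 2 * u₀ y) * t ^ (-(1 : ℝ)) := by
  classical
  have h1 : (0:ℝ) < (4 * π) ^ (-(N : ℝ) / 2) := Real.rpow_pos_of_pos (by positivity) _
  have h2 : (0:ℝ) < 2 ^ ((N : ℝ) / 2) := Real.rpow_pos_of_pos (by norm_num) _
  refine ⟨(3 / 2) * (4 * π) ^ (-(N : ℝ) / 2) + (5 / 2) * 2 ^ ((N : ℝ) / 2), by positivity, ?_⟩
  intro u₀ hu h0 hI2 M hM hMpos xc hxc t ht
  set C : ℝ := (3 / 2) * (4 * π) ^ (-(N : ℝ) / 2) + (5 / 2) * 2 ^ ((N : ℝ) / 2) with hC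
  -- pass to a strongly measurable representative
  set v : EuclideanSpace ℝ (Fin N) → ℝ := fun y => max (hu.1.mk u₀ y) 0 with hvdef
  have hvm : StronglyMeasurable v := (hu.1.stronglyMeasurable_mk.measurable.max measurable_const).stronglyMeasurable
  have hveq : u₀ =ᵐ[volume] v := by
    filter_upwards [hu.1.ae_eq_mk] with y hy
    rw [hvdef]
    simp only
    rw [← hy, max_eq_left (h0 y)]
  have hv0 : ∀ y, 0 ≤ v y := fun y => le_max_right _ _
  have hvu : Integrable v := hu.congr hveq
  have hvI2 : Integrable (fun y => ‖y‖ ^ 2 * v y) :=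
    hI2.congr (by filter_upwards [hveq] with y hy; rw [hy])
  have hMv : M = ∫ y, v y := by rw [hM]; exact integral_congr_ae hveq
  have hxcv : xc = (1 / M) • ∫ y : EuclideanSpace ℝ (Fin N), v y • y := by
    rw [hxc]
    congr 1
    exact integral_congr_ae (by filter_upwards [hveq] with y hy; rw [hy])
  have hN2 : (∫ y, ‖y - xc‖ ^ 2 * u₀ y) = ∫ y, ‖y - xc‖ ^ 2 * v y :=
    integral_congr_ae (by filter_upwards [hveq] with y hy; rw [hy])
  have hsol : ∀ x, heatSol N u₀ x t = heatSol N v x t := by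
    intro x
    unfold heatSol
    exact integral_congr_ae (by filter_upwards [hveq] with y hy; rw [hy])
  have hN2nn : 0 ≤ ∫ y, ‖y - xc‖ ^ 2 * v y :=
    integral_nonneg fun y => mul_nonneg (sq_nonneg _) (hv0 y)
  constructor
  · intro x
    rw [hsol x, hN2]
    refine (HeatAux.sup_bound ht hvm hv0 hvu hvI2 hMv hMpos hxcv x).trans ?_
    have hCle : (3 / 2) * (4 * π) ^ (-(N : ℝ) / 2) ≤ C := by
      rw [hC]; nlinarith
    exact mul_le_mul_of_nonneg_right (mul_le_mul_of_nonneg_right hCle hN2nn)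
      (Real.rpow_pos_of_pos ht _).le
  · have heq : (fun x => |heatSol N u₀ x t - M * heatKernel N t (x - xc)|) =
        fun x => |heatSol N v x t - M * heatKernel N t (x - xc)| :=
      funext fun x => by rw [hsol x]
    rw [heq, hN2]
    refine (HeatAux.L1_bound ht hvm hv0 hvu hvI2 hMv hMpos hxcv).trans ?_
    have hCle : (5 / 2) * 2 ^ ((N : ℝ) / 2) ≤ C := by
      rw [hC]; nlinarith
    exact mul_le_mul_of_nonneg_right (mul_le_mul_of_nonneg_right hCle hN2nn)
      (Real.rpow_pos_of_pos ht _).le
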